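/- Let r ≥ 1, let y₁, …, y_r be integers with ∑_{i=1}^{r} yᵢ = 0, let t, j be natural numbers and k ≥ 1. For each i set ỹᵢ = sign(yᵢ) · ⌊|yᵢ| / 2^t⌋. Then 2^{t+(j+1)·k} divides 2^{t+j·k} · ∑_{i=1}^{r} P^k_j(ỹᵢ) + ∑_{i=1}^{r} sign(yᵢ) · (|yᵢ| mod 2^{t+j·k}). -/
import Mathlib


/-- `P k j z = sign z * (j`-th digit of `|z|` in base `2^k`). -/
def P (k j : ℕ) (z : ℤ) : ℤ := z.sign * ((|z| / 2 ^ (j * k)) % 2 ^ k)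

lemma nat_mod_mul (a m n : ℕ) : a % (m * n) = m * (a / m % n) + a % m := by
  conv_lhs => rw [← Nat.div_add_mod (a % (m * n)) m]
  rw [Nat.mod_mul_right_div_self, Nat.mod_mod_of_dvd _ ⟨n, rfl⟩]

lemma P_shift (y : ℤ) (t j k : ℕ) :
    P k j (y.sign * (|y| / 2 ^ t))
      = y.sign * ((y.natAbs / 2 ^ t / 2 ^ (j * k) % 2 ^ k : ℕ) : ℤ) := by
  rcases eq_or_ne y 0 with rfl | hy
  · simp [P]
  · have h1 : |y| / 2 ^ t = ((y.natAbs / 2 ^ t : ℕ) : ℤ) := by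
      rw [Int.abs_eq_natAbs]; push_cast; ring
    set q : ℕ := y.natAbs / 2 ^ t with hqdef
    by_cases hq : q = 0
    · simp [P, h1, hq]
    · have hq' : (0:ℤ) < (q:ℤ) := by exact_mod_cast Nat.pos_of_ne_zero hq
      have hd : (|(q:ℤ)| / 2 ^ (j * k)) % 2 ^ k = ((q / 2 ^ (j * k) % 2 ^ k : ℕ) : ℤ) := by
        rw [abs_of_nonneg hq'.le]; push_cast; ring
      have hs : y.sign = 1 ∨ y.sign = -1 := by
        rcases lt_trichotomy y 0 with h | rfl | h
        · right; simpa [Int.sign_eq_neg_one_iff_neg]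
        · exact absurd rfl hy
        · left; simpa [Int.sign_eq_one_iff_pos]
      rw [h1]
      rcases hs with h | h
      · rw [h, one_mul]
        simp only [P]
        rw [Int.sign_eq_one_iff_pos.mpr hq', hd]
      · rw [h]
        simp only [P]
        have hneg : (-1 : ℤ) * (q:ℤ) = -(q:ℤ) := by ring
        rw [hneg, Int.sign_neg, Int.sign_eq_one_iff_pos.mpr hq', abs_neg, hd]

lemma pointwise (y : ℤ) (t j k : ℕ) :
    2 ^ (t + j * k) * P k j (y.sign * (|y| / 2 ^ t)) +
        y.sign * (|y| % 2 ^ (t + j * k))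
      = y.sign * (|y| % 2 ^ (t + (j + 1) * k)) := by
  rw [P_shift, Int.abs_eq_natAbs]
  set n : ℕ := y.natAbs
  have hnat : 2 ^ (t + j * k) * (n / 2 ^ t / 2 ^ (j * k) % 2 ^ k) + n % 2 ^ (t + j * k)
      = n % 2 ^ (t + (j + 1) * k) := by
    conv_rhs => rw [show t + (j + 1) * k = t + j * k + k by ring, pow_add, nat_mod_mul]
    rw [Nat.div_div_eq_div_mul, ← pow_add]
  calc 2 ^ (t + j * k) * (y.sign * ((n / 2 ^ t / 2 ^ (j * k) % 2 ^ k : ℕ) : ℤ)) +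
        y.sign * ((n:ℤ) % 2 ^ (t + j * k))
      = y.sign * ((2 ^ (t + j * k) * (n / 2 ^ t / 2 ^ (j * k) % 2 ^ k)
          + n % 2 ^ (t + j * k) : ℕ) : ℤ) := by push_cast; ring
    _ = y.sign * ((n:ℤ) % 2 ^ (t + (j + 1) * k)) := by rw [hnat]; push_cast; ring

theorem key_congruence_shift
    (r : ℕ) (hr : 1 ≤ r) (y : Fin r → ℤ) (hsum : ∑ i, y i = 0)
    (t j k : ℕ) (hk : 1 ≤ k) :
    (2 ^ (t + (j + 1) * k) : ℤ) ∣
      2 ^ (t + j * k) * (∑ i, P k j ((y i).sign * (|y i| / 2 ^ t))) +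
        ∑ i, (y i).sign * (|y i| % 2 ^ (t + j * k)) := by
  rw [Finset.mul_sum, ← Finset.sum_add_distrib]
  simp_rw [pointwise]
  set M : ℤ := 2 ^ (t + (j + 1) * k) with hM
  have : ∑ i, (y i).sign * (|y i| % M) - ∑ i, y i
      = ∑ i, ((y i).sign * (|y i| % M) - y i) := by
    rw [Finset.sum_sub_distrib]
  rw [← sub_zero (∑ i, (y i).sign * (|y i| % M)), ← hsum, this]
  apply Finset.dvd_sum
  intro i _
  have h1 : y i = (y i).sign * |y i| := (Int.sign_mul_abs (y i)).symm
  have hc : (y i).sign * (|y i| % M) - y i = M * ((y i).sign * (-(|y i| / M))) :=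
    calc (y i).sign * (|y i| % M) - y i
      = (y i).sign * ((|y i| % M) - |y i|) := by rw [mul_sub, Int.sign_mul_abs]
    _ = (y i).sign * (-(M * (|y i| / M))) := by rw [Int.emod_def]; ring_nf
    _ = M * ((y i).sign * (-(|y i| / M))) := by ring
  exact ⟨_, hc⟩
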